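/- Let f be a normalized monotone submodular set function on a finite ground set E with f({e}) ≤ 1/40 for every e ∈ E and f(E) ≥ 1/2. Let Φ : E → ℝ≥0 be a nonnegative weight function with Σ_{e∈E} Φ(e) ≤ 10. Then there exists a subset S ⊆ E with Σ_{e∈S} Φ(e) < 1 and f(S) ≥ 1/40. -/

import Mathlib

section AuxExtract

variable {E : Type*} [DecidableEq E]

private lemma aux_diff (f : Finset E → ℝ)
    (hmono : ∀ A B : Finset E, A ⊆ B → f A ≤ f B)
    (hsub : ∀ A B : Finset E, A ⊆ B → ∀ r ∉ B,
      f (insert r B) - f B ≤ f (insert r A) - f A)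
    (A : Finset E) : ∀ B C : Finset E, C ⊆ B →
      f (A ∪ B) - f B ≤ f (A ∪ C) - f C := by
  induction A using Finset.induction_on with
  | empty => intro B C h; simp
  | insert _ _ ha ih =>
      rename_i a A
      intro B C hCB
      have h1 : insert a A ∪ B = insert a (A ∪ B) := by
        simp [Finset.insert_union]
      have h2 : insert a A ∪ C = insert a (A ∪ C) := by
        simp [Finset.insert_union]
      rw [h1, h2]
      by_cases hmem : a ∈ A ∪ B
      · rw [Finset.insert_eq_self.mpr hmem]
        have hih := ih B C hCB
        have hmono' : f (A ∪ C) ≤ f (insert a (A ∪ C)) :=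
          hmono _ _ (Finset.subset_insert _ _)
        linarith
      · have hsub' := hsub (A ∪ C) (A ∪ B) (Finset.union_subset_union_right hCB) a hmem
        have hih := ih B C hCB
        linarith

private lemma aux_subadd (f : Finset E → ℝ)
    (hnorm : f ∅ = 0)
    (hmono : ∀ A B : Finset E, A ⊆ B → f A ≤ f B)
    (hsub : ∀ A B : Finset E, A ⊆ B → ∀ r ∉ B,
      f (insert r B) - f B ≤ f (insert r A) - f A)
    (A B : Finset E) : f (A ∪ B) ≤ f A + f B := by
  have h := aux_diff f hmono hsub A B ∅ (Finset.empty_subset _)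
  simp [hnorm] at h
  linarith

private lemma aux_sum_singletons (f : Finset E → ℝ)
    (hnorm : f ∅ = 0)
    (hmono : ∀ A B : Finset E, A ⊆ B → f A ≤ f B)
    (hsub : ∀ A B : Finset E, A ⊆ B → ∀ r ∉ B,
      f (insert r B) - f B ≤ f (insert r A) - f A)
    (B : Finset E) : f B ≤ ∑ e ∈ B, f {e} := by
  induction B using Finset.induction_on with
  | empty => simp [hnorm]
  | insert _ _ hb ih =>
      rename_i b B
      rw [Finset.sum_insert hb]
      have h1 : f (insert b B) = f ({b} ∪ B) := by rw [Finset.insert_eq]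
      have h2 := aux_subadd f hnorm hmono hsub {b} B
      linarith

private lemma aux_extract (Φ : E → ℝ) :
    ∀ A : Finset E, (∀ e ∈ A, Φ e < 1) → 1/2 ≤ ∑ e ∈ A, Φ e →
    ∃ B ⊆ A, (1/2 ≤ ∑ e ∈ B, Φ e ∧ ∑ e ∈ B, Φ e < 1) := by
  intro A
  induction A using Finset.strongInduction with
  | _ A ih =>
    intro hlt hge
    have hA : A.Nonempty := by
      by_contra hcon
      rw [Finset.not_nonempty_iff_eq_empty] at hcon
      rw [hcon] at hge
      simp at hge
      linarith
    obtain ⟨e, he⟩ := hA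
    by_cases h1 : 1/2 ≤ Φ e
    · exact ⟨{e}, Finset.singleton_subset_iff.mpr he,
        by simpa using h1, by simpa using hlt e he⟩
    · push_neg at h1
      have hsplit : ∑ x ∈ A, Φ x = Φ e + ∑ x ∈ A.erase e, Φ x :=
        (Finset.add_sum_erase A Φ he).symm
      by_cases h2 : 1/2 ≤ ∑ x ∈ A.erase e, Φ x
      · obtain ⟨B, hBsub, hB⟩ := ih (A.erase e) (Finset.erase_ssubset he)
          (fun x hx => hlt x (Finset.mem_of_mem_erase hx)) h2
        exact ⟨B, hBsub.trans (Finset.erase_subset _ _), hB⟩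
      · push_neg at h2
        exact ⟨A, Finset.Subset.refl A, hge, by linarith⟩

private lemma aux_main (f : Finset E → ℝ)
    (hnorm : f ∅ = 0)
    (hmono : ∀ A B : Finset E, A ⊆ B → f A ≤ f B)
    (hsub : ∀ A B : Finset E, A ⊆ B → ∀ r ∉ B,
      f (insert r B) - f B ≤ f (insert r A) - f A)
    (Φ : E → ℝ) :
    ∀ n : ℕ, ∀ A : Finset E, (∀ e ∈ A, Φ e < 1) → ∑ e ∈ A, Φ e ≤ (n : ℝ) / 2 →
      f A < ((max 1 n : ℕ) : ℝ) / 40 ∨ ∃ S ⊆ A, (∑ e ∈ S, Φ e < 1 ∧ 1/40 ≤ f S) := by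
  intro n
  induction n with
  | zero =>
    intro A hlt hw
    norm_num at hw
    by_cases hf : 1/40 ≤ f A
    · exact Or.inr ⟨A, Finset.Subset.refl A, by linarith, hf⟩
    · left
      push_neg at hf
      have hmx : ((max 1 0 : ℕ) : ℝ) = 1 := by norm_num
      rw [hmx]; linarith
  | succ n ih =>
    intro A hlt hw
    by_cases hW : ∑ e ∈ A, Φ e < 1
    · by_cases hf : 1/40 ≤ f A
      · exact Or.inr ⟨A, Finset.Subset.refl A, hW, hf⟩
      · left
        push_neg at hf
        have h1 : (1:ℝ) ≤ ((max 1 (n+1) : ℕ) : ℝ) := by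
          exact_mod_cast le_max_left 1 (n+1)
        linarith
    · push_neg at hW
      obtain ⟨B, hBA, hB1, hB2⟩ := aux_extract Φ A hlt (by linarith)
      by_cases hf : 1/40 ≤ f B
      · exact Or.inr ⟨B, hBA, hB2, hf⟩
      · push_neg at hf
        have hn1 : 1 ≤ n := by
          rcases Nat.eq_zero_or_pos n with h0 | h0
          · subst h0; norm_num at hw; linarith
          · exact h0
        have hsd : ∑ e ∈ A \ B, Φ e = ∑ e ∈ A, Φ e - ∑ e ∈ B, Φ e :=
          Finset.sum_sdiff_eq_sub hBA
        have hA' := ih (A \ B) (fun x hx => hlt x (Finset.mem_sdiff.mp hx).1)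
          (by rw [hsd]; push_cast at hw; linarith)
        rcases hA' with h | ⟨S, hS, hSw, hSf⟩
        · left
          have hunion : B ∪ (A \ B) = A := Finset.union_sdiff_of_subset hBA
          have hsa : f A ≤ f B + f (A \ B) := by
            have h' := aux_subadd f hnorm hmono hsub B (A \ B)
            rwa [hunion] at h'
          have hm1 : ((max 1 n : ℕ) : ℝ) = (n : ℝ) := by
            rw [max_eq_right hn1]
          have hm2 : ((max 1 (n+1) : ℕ) : ℝ) = (n : ℝ) + 1 := by
            rw [max_eq_right (by omega : 1 ≤ n+1)]; push_cast; ring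
          rw [hm2]
          rw [hm1] at h
          linarith
        · exact Or.inr ⟨S, hS.trans Finset.sdiff_subset, hSw, hSf⟩

end AuxExtract

/-- **Extraction step in rounding the separation problem.** If `f` is a normalized
monotone submodular function on a finite ground set `E` with all singleton values at
most `1/40` and `f(E) ≥ 1/2`, and `Φ` is a nonnegative weight function with total
weight at most `10`, then there is a subset `S ⊆ E` of weight less than `1` with
`f(S) ≥ 1/40`. -/
theorem extract_cheap_valuable_subset
    {E : Type*} [Fintype E] [DecidableEq E]
    (f : Finset E → ℝ)
    (hnorm : f ∅ = 0)
    (hmono : ∀ A B : Finset E, A ⊆ B → f A ≤ f B)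
    (hsub : ∀ A B : Finset E, A ⊆ B → ∀ r ∉ B,
      f (insert r B) - f B ≤ f (insert r A) - f A)
    (hsing : ∀ e : E, f {e} ≤ 1 / 40)
    (hbig : 1 / 2 ≤ f Finset.univ)
    (Φ : E → ℝ) (hΦ : ∀ e, 0 ≤ Φ e)
    (hΦsum : ∑ e : E, Φ e ≤ 10) :
    ∃ S : Finset E, (∑ e ∈ S, Φ e < 1) ∧ 1 / 40 ≤ f S := by
  classical
  set L := Finset.univ.filter (fun e => Φ e < 1) with hL
  set H := Finset.univ.filter (fun e => ¬ Φ e < 1) with hH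
  have hLH : L ∪ H = Finset.univ := Finset.filter_union_filter_not_eq _ _
  have hdisj : Disjoint L H := Finset.disjoint_filter_filter_not _ _ _
  have hcardH : (H.card : ℝ) ≤ ∑ e ∈ H, Φ e := by
    have hone : ∀ e ∈ H, (1:ℝ) ≤ Φ e := fun e he =>
      not_lt.mp (Finset.mem_filter.mp he).2
    calc (H.card : ℝ) = ∑ _e ∈ H, (1:ℝ) := by simp
      _ ≤ ∑ e ∈ H, Φ e := Finset.sum_le_sum hone
  have hsum_split : ∑ e ∈ L, Φ e + ∑ e ∈ H, Φ e = ∑ e : E, Φ e := by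
    rw [← Finset.sum_union hdisj, hLH]
  have hLnonneg : 0 ≤ ∑ e ∈ L, Φ e := Finset.sum_nonneg (fun e _ => hΦ e)
  have hh10 : H.card ≤ 10 := by
    by_contra hcon
    push_neg at hcon
    have h11 : (11:ℝ) ≤ (H.card : ℝ) := by exact_mod_cast hcon
    linarith
  have hfL : 1/2 - (H.card : ℝ)/40 ≤ f L := by
    have h1 : f Finset.univ ≤ f L + f H := by
      have h' := aux_subadd f hnorm hmono hsub L H
      rwa [hLH] at h'
    have h2 : f H ≤ ∑ e ∈ H, f {e} := aux_sum_singletons f hnorm hmono hsub H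
    have h3 : ∑ e ∈ H, f {e} ≤ (H.card : ℝ) * (1/40) := by
      calc ∑ e ∈ H, f {e} ≤ ∑ _e ∈ H, (1/40 : ℝ) :=
            Finset.sum_le_sum (fun e _ => hsing e)
        _ = (H.card : ℝ) * (1/40) := by simp [mul_comm]
    linarith
  set h := H.card with hhdef
  have hWL : ∑ e ∈ L, Φ e ≤ ((20 - 2*h : ℕ) : ℝ) / 2 := by
    have hcast : ((20 - 2*h : ℕ) : ℝ) = 20 - 2*(h:ℝ) := by
      have hle : 2*h ≤ 20 := by omega
      rw [Nat.cast_sub hle]; push_cast; ring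
    rw [hcast]; linarith
  have hmain := aux_main f hnorm hmono hsub Φ (20 - 2*h) L
    (fun e he => (Finset.mem_filter.mp he).2) hWL
  rcases hmain with hbad | ⟨S, _hSL, hSw, hSf⟩
  · exfalso
    have hmax : ((max 1 (20 - 2*h) : ℕ) : ℝ) ≤ 20 - (h:ℝ) := by
      have h1 : max 1 (20 - 2*h) ≤ 20 - h := by omega
      have h2 : ((20 - h : ℕ) : ℝ) = 20 - (h:ℝ) := by
        rw [Nat.cast_sub (by omega : h ≤ 20)]; push_cast; ring
      calc ((max 1 (20-2*h):ℕ):ℝ) ≤ ((20-h:ℕ):ℝ) := by exact_mod_cast h1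
        _ = 20 - (h:ℝ) := h2
    linarith
  · exact ⟨S, hSw, hSf⟩
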